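/- Let n ≥ 2 and let T be the set of pairs (ε_{−i,i} ⊔ ε_{−j,j}, ε_{−i,i} ⊔ ε_{i,j}) for 1 ≤ i < j ≤ n, viewed as relations on the monoid SP_n of signed partitions of [±n]. If H and K are disjoint nonempty zero subsets of [±n] (i.e. −H = H, −K = K, H ∩ K = ∅), then the pair (μ_H ⊔ μ_K, μ_{H∪K}) lies in the congruence on SP_n generated by T. -/
import Mathlib


instance setoidCommMonoid (α : Type*) : CommMonoid (Setoid α) where
  mul := (· ⊔ ·)
  one := ⊥
  mul_assoc := sup_assoc
  one_mul := bot_sup_eq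
  mul_one := sup_bot_eq
  mul_comm := sup_comm

def muSet {α : Type*} (X : Set α) : Setoid α :=
  Relation.EqvGen.setoid (fun x y => x ∈ X ∧ y ∈ X)

def mu {α : Type*} (i j : α) : Setoid α := muSet {i, j}

/-- `[±n]`: nonzero integers of absolute value at most `n`, with the order from `ℤ`. -/
abbrev PM (n : ℕ) := {k : ℤ // k ≠ 0 ∧ |k| ≤ (n : ℤ)}

namespace PM

/-- The negation involution `k ↦ -k` on `[±n]`. -/
def neg {n : ℕ} (x : PM n) : PM n :=
  ⟨-x.1, by obtain ⟨h1, h2⟩ := x.2; exact ⟨neg_ne_zero.mpr h1, by rwa [abs_neg]⟩⟩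

@[simp] theorem neg_neg {n : ℕ} (x : PM n) : x.neg.neg = x := Subtype.ext (by simp [neg])

theorem neg_lt_neg {n : ℕ} {x y : PM n} (h : x < y) : y.neg < x.neg := by
  have h' : x.1 < y.1 := Subtype.coe_lt_coe.mpr h
  rw [← Subtype.coe_lt_coe]
  show -y.1 < -x.1
  omega

theorem neg_lt_pos {n : ℕ} {x y : PM n} (hx : 0 < x.1) (hy : 0 < y.1) : x.neg < y := by
  rw [← Subtype.coe_lt_coe]
  show -x.1 < y.1
  omega

theorem pos_ne_neg {n : ℕ} {x y : PM n} (hx : 0 < x.1) (hy : 0 < y.1) : y ≠ x.neg := by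
  intro h
  have : y.1 = -x.1 := congrArg Subtype.val h
  omega

theorem neg_lt_self {n : ℕ} {x : PM n} (hx : 0 < x.1) : x.neg < x := neg_lt_pos hx hx

/-- The absolute value map `x ↦ |x|` from `[±n]` to its positive part. -/
def abs {n : ℕ} (x : PM n) : PM n :=
  ⟨|x.1|, by obtain ⟨h1, h2⟩ := x.2; exact ⟨abs_ne_zero.mpr h1, by rwa [abs_abs]⟩⟩

end PM

/-- Image of a subset of `[±n]` under negation. -/
def negSet {n : ℕ} (K : Set (PM n)) : Set (PM n) := PM.neg '' K

/-- The partition `I⁻` transported along negation: `x ∼ y` in `negPart I` iff `-x ∼ -y` in `I`. -/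
def negPart {n : ℕ} (I : Setoid (PM n)) : Setoid (PM n) := Setoid.comap PM.neg I

/-- A set partition `I` of `[±n]` is *signed* if for every block `K` of `I` the set `-K` is
also a block; equivalently, `x ∼ y ↔ -x ∼ -y` for all `x, y`. -/
def IsSigned {n : ℕ} (I : Setoid (PM n)) : Prop :=
  ∀ x y : PM n, I x y ↔ I (PM.neg x) (PM.neg y)

/-- A *zero block* of a partition `I` is a block `K` with `-K = K`. -/
def IsZeroBlock {n : ℕ} (I : Setoid (PM n)) (K : Set (PM n)) : Prop :=
  K ∈ I.classes ∧ negSet K = K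

/-- A `Bₙ`-partition: a signed partition of `[±n]` with at most one zero block. -/
def IsBPart {n : ℕ} (I : Setoid (PM n)) : Prop :=
  IsSigned I ∧ Set.Subsingleton {K | IsZeroBlock I K}

/-- A *restricted* signed partition: all its zero blocks have more than two elements. -/
def IsRestricted {n : ℕ} (I : Setoid (PM n)) : Prop :=
  IsSigned I ∧ ∀ K : Set (PM n), IsZeroBlock I K → 2 < K.ncard

/-- A `Dₙ`-partition: a `Bₙ`-partition whose zero block (if present) has more than two
elements. -/
def IsDPart {n : ℕ} (I : Setoid (PM n)) : Prop :=
  IsBPart I ∧ ∀ K : Set (PM n), IsZeroBlock I K → 2 < K.ncard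

/-- For `i < j` in `[±n]`, the signed partition `ε_{i,j} = μ_{-j,-i} ⊔ μ_{i,j}`. -/
def eps {n : ℕ} (i j : PM n) : Setoid (PM n) := mu (PM.neg j) (PM.neg i) ⊔ mu i j

theorem PM.neg_injective {n : ℕ} : Function.Injective (PM.neg : PM n → PM n) :=
  Function.LeftInverse.injective PM.neg_neg

theorem negPart_rel {n : ℕ} (I : Setoid (PM n)) (x y : PM n) :
    negPart I x y ↔ I (PM.neg x) (PM.neg y) := Iff.rfl

theorem negPart_mono {n : ℕ} {I J : Setoid (PM n)} (h : I ≤ J) : negPart I ≤ negPart J := by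
  rw [Setoid.le_def] at h ⊢
  intro x y hxy
  exact h hxy

theorem negPart_negPart {n : ℕ} (I : Setoid (PM n)) : negPart (negPart I) = I := by
  apply Setoid.ext
  intro x y
  show I (PM.neg (PM.neg x)) (PM.neg (PM.neg y)) ↔ I x y
  rw [PM.neg_neg, PM.neg_neg]

theorem negPart_sup {n : ℕ} (I J : Setoid (PM n)) :
    negPart (I ⊔ J) = negPart I ⊔ negPart J := by
  apply le_antisymm
  · have h1 : I ⊔ J ≤ negPart (negPart I ⊔ negPart J) := by
      have h2 : negPart (negPart I) ⊔ negPart (negPart J) ≤ negPart (negPart I ⊔ negPart J) :=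
        sup_le (negPart_mono le_sup_left) (negPart_mono le_sup_right)
      simpa [negPart_negPart] using h2
    have h3 := negPart_mono h1
    simpa [negPart_negPart] using h3
  · exact sup_le (negPart_mono le_sup_left) (negPart_mono le_sup_right)

theorem isSigned_iff_negPart_eq {n : ℕ} (I : Setoid (PM n)) :
    IsSigned I ↔ negPart I = I := by
  constructor
  · intro h
    apply Setoid.ext
    intro x y
    exact (h x y).symm
  · intro h x y
    have h' := Setoid.ext_iff.mp h x y
    exact h'.symm

/-- The submonoid `SPₙ` of signed partitions of `[±n]`. -/
def SPn (n : ℕ) : Submonoid (Setoid (PM n)) where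
  carrier := {I | IsSigned I}
  one_mem' := by
    intro x y
    show (⊥ : Setoid (PM n)) x y ↔ (⊥ : Setoid (PM n)) (PM.neg x) (PM.neg y)
    simp only [Setoid.bot_def]
    exact ⟨fun h => congrArg PM.neg h, fun h => PM.neg_injective h⟩
  mul_mem' := by
    intro a b ha hb
    replace ha : IsSigned a := ha
    replace hb : IsSigned b := hb
    show IsSigned (a ⊔ b)
    rw [isSigned_iff_negPart_eq] at ha hb ⊢
    rw [negPart_sup, ha, hb]

/-- The set `T` of pairs `(ε_{-i,i} ⊔ ε_{-j,j}, ε_{-i,i} ⊔ ε_{i,j})` for positive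
`i < j`, viewed as a binary relation on the monoid `SPₙ` of signed partitions. -/
def TRelB (n : ℕ) : ↥(SPn n) → ↥(SPn n) → Prop := fun a b =>
  ∃ i j : PM n, 0 < i.1 ∧ 0 < j.1 ∧ i < j ∧
    (a : Setoid (PM n)) = eps (PM.neg i) i ⊔ eps (PM.neg j) j ∧
    (b : Setoid (PM n)) = eps (PM.neg i) i ⊔ eps i j


section Aux

theorem muSet_le' {α : Type*} {S : Set α} {I : Setoid α}
    (h : ∀ x ∈ S, ∀ y ∈ S, I x y) : muSet S ≤ I :=
  Setoid.eqvGen_le fun x y hxy => h x hxy.1 y hxy.2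

theorem muSet_mono' {α : Type*} {S T : Set α} (h : S ⊆ T) : muSet S ≤ muSet T :=
  Setoid.eqvGen_mono fun _ _ hxy => ⟨h hxy.1, h hxy.2⟩

theorem muSet_rel' {α : Type*} {S : Set α} {x y : α} (hx : x ∈ S) (hy : y ∈ S) :
    muSet S x y :=
  Relation.EqvGen.rel _ _ ⟨hx, hy⟩

theorem setoid_mul_eq_sup {α : Type*} (I J : Setoid α) : I * J = I ⊔ J := rfl

theorem mem_negSet' {n : ℕ} {S : Set (PM n)} {x : PM n} :
    x ∈ negSet S ↔ PM.neg x ∈ S := by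
  constructor
  · rintro ⟨y, hy, rfl⟩; simpa [PM.neg_neg] using hy
  · intro h; exact ⟨PM.neg x, h, PM.neg_neg x⟩

theorem negSet_negSet' {n : ℕ} (S : Set (PM n)) : negSet (negSet S) = S := by
  ext x; simp [mem_negSet', PM.neg_neg]

theorem eqvGen_neg' {n : ℕ} {S : Set (PM n)} {u v : PM n}
    (h : Relation.EqvGen (fun x y => x ∈ S ∧ y ∈ S) u v) :
    Relation.EqvGen (fun x y => x ∈ negSet S ∧ y ∈ negSet S) (PM.neg u) (PM.neg v) := by
  induction h with
  | rel a b hab => exact .rel _ _ ⟨⟨a, hab.1, rfl⟩, ⟨b, hab.2, rfl⟩⟩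
  | refl a => exact .refl _
  | symm a b _ ih => exact .symm _ _ ih
  | trans a b c _ _ ih1 ih2 => exact .trans _ _ _ ih1 ih2

theorem negPart_muSet' {n : ℕ} (S : Set (PM n)) :
    negPart (muSet S) = muSet (negSet S) := by
  apply Setoid.ext
  intro x y
  constructor
  · intro h
    have h2 := eqvGen_neg' (S := S) h
    rw [PM.neg_neg, PM.neg_neg] at h2
    exact h2
  · intro h
    have h2 := eqvGen_neg' (S := negSet S) h
    rw [negSet_negSet'] at h2
    exact h2

theorem negSet_pair' {n : ℕ} (u v : PM n) :
    negSet {u, v} = {PM.neg u, PM.neg v} := by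
  ext x
  simp only [mem_negSet', Set.mem_insert_iff, Set.mem_singleton_iff]
  constructor
  · rintro (h | h)
    · left; rw [← PM.neg_neg x, h]
    · right; rw [← PM.neg_neg x, h]
  · rintro (rfl | rfl)
    · left; exact PM.neg_neg u
    · right; exact PM.neg_neg v

theorem isSigned_eps' {n : ℕ} (i j : PM n) : IsSigned (eps i j) := by
  rw [isSigned_iff_negPart_eq]
  show negPart (mu (PM.neg j) (PM.neg i) ⊔ mu i j) = _
  rw [negPart_sup]
  show negPart (muSet {PM.neg j, PM.neg i}) ⊔ negPart (muSet {i, j}) = _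
  rw [negPart_muSet', negPart_muSet', negSet_pair', negSet_pair', PM.neg_neg, PM.neg_neg]
  show muSet {j, i} ⊔ muSet {PM.neg i, PM.neg j} =
    muSet {PM.neg j, PM.neg i} ⊔ muSet {i, j}
  rw [Set.pair_comm j i, Set.pair_comm (PM.neg i) (PM.neg j), sup_comm]

theorem eps_neg_self' {n : ℕ} (a : PM n) : eps (PM.neg a) a = mu (PM.neg a) a := by
  show mu (PM.neg a) (PM.neg (PM.neg a)) ⊔ mu (PM.neg a) a = mu (PM.neg a) a
  rw [PM.neg_neg, sup_idem]

theorem absorb' {n : ℕ} {H K : Set (PM n)} {a b : PM n}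
    (haH : a ∈ H) (hnaH : PM.neg a ∈ H) (hbK : b ∈ K) (hnbK : PM.neg b ∈ K) :
    (mu (PM.neg a) a ⊔ mu (PM.neg b) b) ⊔ (muSet H ⊔ muSet K) = muSet H ⊔ muSet K := by
  rw [sup_eq_right]
  apply sup_le
  · exact le_trans (muSet_mono' (Set.insert_subset_iff.mpr
      ⟨hnaH, Set.singleton_subset_iff.mpr haH⟩)) le_sup_left
  · exact le_trans (muSet_mono' (Set.insert_subset_iff.mpr
      ⟨hnbK, Set.singleton_subset_iff.mpr hbK⟩)) le_sup_right

theorem key2' {n : ℕ} {H K : Set (PM n)} {a b : PM n}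
    (haH : a ∈ H) (hnaH : PM.neg a ∈ H) (hbK : b ∈ K) (hnbK : PM.neg b ∈ K) :
    (mu (PM.neg a) a ⊔ (mu (PM.neg b) (PM.neg a) ⊔ mu a b)) ⊔ (muSet H ⊔ muSet K) =
      muSet (H ∪ K) := by
  apply le_antisymm
  · refine sup_le (sup_le ?_ (sup_le ?_ ?_))
      (sup_le (muSet_mono' Set.subset_union_left) (muSet_mono' Set.subset_union_right))
    · exact muSet_mono' (Set.insert_subset_iff.mpr
        ⟨Set.mem_union_left _ hnaH, Set.singleton_subset_iff.mpr (Set.mem_union_left _ haH)⟩)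
    · exact muSet_mono' (Set.insert_subset_iff.mpr
        ⟨Set.mem_union_right _ hnbK, Set.singleton_subset_iff.mpr (Set.mem_union_left _ hnaH)⟩)
    · exact muSet_mono' (Set.insert_subset_iff.mpr
        ⟨Set.mem_union_left _ haH, Set.singleton_subset_iff.mpr (Set.mem_union_right _ hbK)⟩)
  · set S := (mu (PM.neg a) a ⊔ (mu (PM.neg b) (PM.neg a) ⊔ mu a b)) ⊔ (muSet H ⊔ muSet K)
      with hS
    have hHle : muSet H ≤ S := le_trans le_sup_left le_sup_right
    have hKle : muSet K ≤ S := le_trans le_sup_right le_sup_right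
    have hab : S a b := Setoid.le_def.mp
      (le_trans (le_trans le_sup_right le_sup_right) le_sup_left) (muSet_rel' (Set.mem_insert a {b}) (Set.mem_insert_of_mem a rfl))
    apply muSet_le'
    intro x hx y hy
    rcases hx with hx | hx <;> rcases hy with hy | hy
    · exact Setoid.le_def.mp hHle (muSet_rel' hx hy)
    · exact S.trans' (Setoid.le_def.mp hHle (muSet_rel' hx haH))
        (S.trans' hab (Setoid.le_def.mp hKle (muSet_rel' hbK hy)))
    · exact S.trans' (Setoid.le_def.mp hKle (muSet_rel' hx hbK))
        (S.trans' (S.symm' hab) (Setoid.le_def.mp hHle (muSet_rel' haH hy)))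
    · exact Setoid.le_def.mp hKle (muSet_rel' hx hy)

end Aux

/-- If `H` and `K` are disjoint nonempty zero subsets of `[±n]`
(`-H = H`, `-K = K`, `H ∩ K = ∅`), then the pair `(μ_H ⊔ μ_K, μ_{H∪K})` lies in the
congruence on `SPₙ` generated by `T`. -/
theorem muH_muK_conGen_T (n : ℕ) (hn : 2 ≤ n) (H K : Set (PM n))
    (hHne : H.Nonempty) (hKne : K.Nonempty)
    (hHz : negSet H = H) (hKz : negSet K = K) (hdisj : H ∩ K = ∅) :
    ∀ a b : ↥(SPn n),
      (a : Setoid (PM n)) = muSet H ⊔ muSet K →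
      (b : Setoid (PM n)) = muSet (H ∪ K) →
      conGen (TRelB n) a b := by
  intro A B hA hB
  obtain ⟨x0, hx0⟩ := hHne
  obtain ⟨y0, hy0⟩ := hKne
  have hHneg : ∀ x ∈ H, PM.neg x ∈ H := by
    intro x hx; rw [← hHz]; exact ⟨x, hx, rfl⟩
  have hKneg : ∀ x ∈ K, PM.neg x ∈ K := by
    intro x hx; rw [← hKz]; exact ⟨x, hx, rfl⟩
  have habsmem : ∀ (Z : Set (PM n)), (∀ x ∈ Z, PM.neg x ∈ Z) → ∀ x ∈ Z, PM.abs x ∈ Z := by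
    intro Z hZ x hx
    rcases x.2.1.lt_or_gt with h | h
    · have : PM.abs x = PM.neg x := Subtype.ext (abs_of_neg h)
      rw [this]; exact hZ x hx
    · have : PM.abs x = x := Subtype.ext (abs_of_pos h)
      rw [this]; exact hx
  set a := PM.abs x0 with ha_def
  set b := PM.abs y0 with hb_def
  have hapos : 0 < a.1 := abs_pos.mpr x0.2.1
  have hbpos : 0 < b.1 := abs_pos.mpr y0.2.1
  have haH : a ∈ H := habsmem H hHneg x0 hx0
  have hbK : b ∈ K := habsmem K hKneg y0 hy0
  have hnaH : PM.neg a ∈ H := hHneg a haH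
  have hnbK : PM.neg b ∈ K := hKneg b hbK
  have hne : a ≠ b := by
    intro h
    exact Set.eq_empty_iff_forall_notMem.mp hdisj a ⟨haH, h ▸ hbK⟩
  rcases hne.lt_or_gt with hlt | hlt
  · set X : ↥(SPn n) := ⟨eps (PM.neg a) a ⊔ eps (PM.neg b) b,
      (SPn n).mul_mem (isSigned_eps' _ _) (isSigned_eps' _ _)⟩ with hX
    set Y : ↥(SPn n) := ⟨eps (PM.neg a) a ⊔ eps a b,
      (SPn n).mul_mem (isSigned_eps' _ _) (isSigned_eps' _ _)⟩ with hY
    have hXY : conGen (TRelB n) X Y :=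
      ConGen.Rel.of _ _ ⟨a, b, hapos, hbpos, hlt, rfl, rfl⟩
    have hmul : conGen (TRelB n) (X * A) (Y * A) :=
      (conGen (TRelB n)).mul hXY ((conGen (TRelB n)).refl A)
    have h1 : X * A = A := by
      apply Subtype.ext
      rw [Submonoid.coe_mul, hA]
      show (eps (PM.neg a) a ⊔ eps (PM.neg b) b) ⊔ (muSet H ⊔ muSet K) = muSet H ⊔ muSet K
      rw [eps_neg_self', eps_neg_self']
      exact absorb' haH hnaH hbK hnbK
    have h2 : Y * A = B := by
      apply Subtype.ext
      rw [Submonoid.coe_mul, hA, hB]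
      show (eps (PM.neg a) a ⊔ eps a b) ⊔ (muSet H ⊔ muSet K) = muSet (H ∪ K)
      rw [eps_neg_self']
      show (mu (PM.neg a) a ⊔ (mu (PM.neg b) (PM.neg a) ⊔ mu a b)) ⊔ (muSet H ⊔ muSet K) = _
      exact key2' haH hnaH hbK hnbK
    rw [h1, h2] at hmul
    exact hmul
  · set X : ↥(SPn n) := ⟨eps (PM.neg b) b ⊔ eps (PM.neg a) a,
      (SPn n).mul_mem (isSigned_eps' _ _) (isSigned_eps' _ _)⟩ with hX
    set Y : ↥(SPn n) := ⟨eps (PM.neg b) b ⊔ eps b a,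
      (SPn n).mul_mem (isSigned_eps' _ _) (isSigned_eps' _ _)⟩ with hY
    have hXY : conGen (TRelB n) X Y :=
      ConGen.Rel.of _ _ ⟨b, a, hbpos, hapos, hlt, rfl, rfl⟩
    have hmul : conGen (TRelB n) (X * A) (Y * A) :=
      (conGen (TRelB n)).mul hXY ((conGen (TRelB n)).refl A)
    have h1 : X * A = A := by
      apply Subtype.ext
      rw [Submonoid.coe_mul, hA]
      show (eps (PM.neg b) b ⊔ eps (PM.neg a) a) ⊔ (muSet H ⊔ muSet K) = muSet H ⊔ muSet K
      rw [eps_neg_self', eps_neg_self', sup_comm (muSet H) (muSet K)]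
      exact absorb' hbK hnbK haH hnaH
    have h2 : Y * A = B := by
      apply Subtype.ext
      rw [Submonoid.coe_mul, hA, hB]
      show (eps (PM.neg b) b ⊔ eps b a) ⊔ (muSet H ⊔ muSet K) = muSet (H ∪ K)
      rw [eps_neg_self']
      show (mu (PM.neg b) b ⊔ (mu (PM.neg a) (PM.neg b) ⊔ mu b a)) ⊔ (muSet H ⊔ muSet K) = _
      rw [sup_comm (muSet H) (muSet K), Set.union_comm H K]
      exact key2' hbK hnbK haH hnaH
    rw [h1, h2] at hmul
    exact hmul
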